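/- There exists a pair of orthogonal 9-cycle decompositions of the complete tripartite graph K_{9,9,9}: two partitions of the edge set of K_{9,9,9} into cycles of length 9 such that any cycle of the first partition and any cycle of the second partition share at most one edge. -/

import Mathlib

/-- A set of edges `C` forms a cycle of length `l`: there is a graph and a closed walk
which is a cycle, has length `l`, and whose edge set is exactly `C`. -/
def IsCycleEdgeSet {V : Type*} (l : ℕ) (C : Set (Sym2 V)) : Prop :=
  ∃ (G : SimpleGraph V) (x : V) (w : G.Walk x x),
    w.IsCycle ∧ w.length = l ∧ C = {e | e ∈ w.edges}

/-- `D` is a decomposition of the edge set of `G` into cycles of length `l`: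
each member of `D` is the edge set of an `l`-cycle contained in `G`, and every
edge of `G` lies in exactly one member of `D`. -/
def IsCycleDecomposition {V : Type*} (G : SimpleGraph V) (l : ℕ)
    (D : Set (Set (Sym2 V))) : Prop :=
  (∀ C ∈ D, IsCycleEdgeSet l C ∧ C ⊆ G.edgeSet) ∧
  (∀ e ∈ G.edgeSet, ∃! C, C ∈ D ∧ e ∈ C)

/-- Two cycle decompositions are orthogonal if any member of the first and any member
of the second share at most one edge. -/
def OrthogonalDecompositions {V : Type*} (D₁ D₂ : Set (Set (Sym2 V))) : Prop :=
  ∀ C₁ ∈ D₁, ∀ C₂ ∈ D₂, (C₁ ∩ C₂).Subsingleton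

abbrev G999 : SimpleGraph (Fin 27) :=
  SimpleGraph.fromRel (fun x y : Fin 27 => (x : ℕ) / 9 ≠ (y : ℕ) / 9)

instance : DecidableRel G999.Adj := fun a b =>
  decidable_of_iff (a ≠ b ∧ ((a : ℕ) / 9 ≠ (b : ℕ) / 9 ∨ (b : ℕ) / 9 ≠ (a : ℕ) / 9)) Iff.rfl

/-- A kernel-reduction-friendly version of `List.Chain`. -/
def chainD {α : Type*} (R : α → α → Prop) : α → List α → Prop
  | _, [] => True
  | x, a :: l => R x a ∧ chainD R a l

instance chainD.inst {α : Type*} (R : α → α → Prop) [DecidableRel R] :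
    ∀ (x : α) (l : List α), Decidable (chainD R x l)
  | _, [] => .isTrue trivial
  | _, a :: l => @instDecidableAnd _ _ _ (chainD.inst R a l)

theorem chainD.toChain {α : Type*} {R : α → α → Prop} :
    ∀ {x : α} {l : List α}, chainD R x l → List.Chain R x l
  | _, [], _ => .nil
  | _, _ :: _, h => .cons h.1 (chainD.toChain h.2)

/-- Build a walk from a chain of adjacent vertices. -/
def walkOf {V : Type*} (G : SimpleGraph V) :
    (x y : V) → (l : List V) → List.Chain G.Adj x (l ++ [y]) → G.Walk x y
  | _, _, [], h => SimpleGraph.Walk.cons (List.chain_cons.mp h).1 SimpleGraph.Walk.nil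
  | x, y, a :: l, h =>
      SimpleGraph.Walk.cons (List.chain_cons.mp h).1 (walkOf G a y l (List.chain_cons.mp h).2)

theorem support_walkOf {V : Type*} (G : SimpleGraph V) :
    ∀ (x y : V) (l : List V) (h : List.Chain G.Adj x (l ++ [y])),
      (walkOf G x y l h).support = x :: (l ++ [y])
  | x, y, [], h => rfl
  | x, y, a :: l, h => by
      simp [walkOf, support_walkOf G a y l]
      exact support_walkOf G a y l _

theorem edges_walkOf {V : Type*} (G : SimpleGraph V) :
    ∀ (x y : V) (l : List V) (h : List.Chain G.Adj x (l ++ [y])),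
      (walkOf G x y l h).edges = ((x :: l).zip (l ++ [y])).map (fun p => s(p.1, p.2))
  | x, y, [], h => rfl
  | x, y, a :: l, h => by
      simp [walkOf, SimpleGraph.Walk.edges_cons, edges_walkOf G a y l]
      exact edges_walkOf G a y l _

theorem ne_nil_walkOf {V : Type*} (G : SimpleGraph V) (x : V) (l : List V)
    (h : List.Chain G.Adj x (l ++ [x])) : walkOf G x x l h ≠ SimpleGraph.Walk.nil := by
  cases l <;> simp [walkOf]

/-- Consecutive (cyclically) pairs of a list. -/
def pairs (l : List (Fin 27)) : List (Fin 27 × Fin 27) := l.zip (l.rotate 1)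

/-- The edge list of a cyclic vertex list. -/
def edgesOf (l : List (Fin 27)) : List (Sym2 (Fin 27)) :=
  (pairs l).map (fun p => s(p.1, p.2))

/-- Unordered membership of the pair `(a, b)` in a list of pairs. -/
def pmemP (a b : Fin 27) (L : List (Fin 27 × Fin 27)) : Prop :=
  ∃ p ∈ L, (p.1 = a ∧ p.2 = b) ∨ (p.1 = b ∧ p.2 = a)

/-- Unordered equality of pairs. -/
def eqvP (p q : Fin 27 × Fin 27) : Prop :=
  (q.1 = p.1 ∧ q.2 = p.2) ∨ (q.1 = p.2 ∧ q.2 = p.1)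

instance pmemP.inst (a b : Fin 27) (L : List (Fin 27 × Fin 27)) : Decidable (pmemP a b L) :=
  inferInstanceAs (Decidable (∃ p ∈ L, (p.1 = a ∧ p.2 = b) ∨ (p.1 = b ∧ p.2 = a)))

instance eqvP.inst (p q : Fin 27 × Fin 27) : Decidable (eqvP p q) :=
  inferInstanceAs (Decidable ((q.1 = p.1 ∧ q.2 = p.2) ∨ (q.1 = p.2 ∧ q.2 = p.1)))

theorem mem_edgesOf {a b : Fin 27} {l : List (Fin 27)} :
    s(a, b) ∈ edgesOf l ↔ pmemP a b (pairs l) := by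
  simp only [edgesOf, List.mem_map, pmemP, Sym2.eq_iff]

theorem cycleEdgeSet_of (x : Fin 27) (rest : List (Fin 27))
    (hchainD : chainD G999.Adj x (rest ++ [x]))
    (hlen : rest.length = 8)
    (hnodup_e : List.Pairwise (fun p q => ¬ eqvP p q) (pairs (x :: rest)))
    (hnodup_s : (rest ++ [x]).Nodup) :
    IsCycleEdgeSet 9 {e | e ∈ edgesOf (x :: rest)} ∧
      {e | e ∈ edgesOf (x :: rest)} ⊆ G999.edgeSet := by
  have hchain : List.Chain G999.Adj x (rest ++ [x]) := hchainD.toChain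
  have hedges : edgesOf (x :: rest) = (walkOf G999 x x rest hchain).edges := by
    rw [edges_walkOf, edgesOf, pairs, List.rotate_cons_succ, List.rotate_zero]
  constructor
  · refine ⟨G999, x, walkOf G999 x x rest hchain, ⟨⟨⟨?_⟩, ne_nil_walkOf G999 x rest hchain⟩, ?_⟩,
      ?_, by rw [hedges]⟩
    · rw [← hedges, edgesOf]
      refine hnodup_e.map _ (fun p q hpq => ?_)
      intro hs
      rw [Sym2.eq_iff] at hs
      rcases hs with ⟨h1, h2⟩ | ⟨h1, h2⟩
      · exact hpq (Or.inl ⟨h1.symm, h2.symm⟩)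
      · exact hpq (Or.inr ⟨h2.symm, h1.symm⟩)
    · rw [support_walkOf]; exact hnodup_s
    · have := SimpleGraph.Walk.length_support (walkOf G999 x x rest hchain)
      rw [support_walkOf] at this
      simp [hlen] at this
      omega
  · intro e he
    rw [Set.mem_setOf_eq, hedges] at he
    exact SimpleGraph.Walk.edges_subset_edgeSet _ he

theorem cover_lemma (verts : List (List (Fin 27)))
    (hex : ∀ a b : Fin 27, G999.Adj a b → ∃ l ∈ verts, pmemP a b (pairs l))
    (hdisj : verts.Pairwise (fun l₁ l₂ => ∀ p ∈ pairs l₁, ¬ pmemP p.1 p.2 (pairs l₂))) :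
    ∀ e ∈ G999.edgeSet,
      ∃! C, C ∈ {C | ∃ l ∈ verts, C = {e | e ∈ edgesOf l}} ∧ e ∈ C := by
  have hdisj' : verts.Pairwise (fun l₁ l₂ => ∀ e ∈ edgesOf l₁, e ∉ edgesOf l₂) := by
    refine hdisj.imp ?_
    intro l₁ l₂ h e he₁ he₂
    obtain ⟨p, hp, rfl⟩ := List.mem_map.mp he₁
    exact h p hp (mem_edgesOf.mp he₂)
  intro e he
  induction e with
  | _ a b =>
    rw [SimpleGraph.mem_edgeSet] at he
    obtain ⟨l, hl, hmem⟩ := hex a b he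
    have hmem' : s(a, b) ∈ edgesOf l := mem_edgesOf.mpr hmem
    refine ⟨{e | e ∈ edgesOf l}, ⟨⟨l, hl, rfl⟩, hmem'⟩, ?_⟩
    rintro C ⟨⟨l', hl', rfl⟩, hmem''⟩
    have hsymm : Symmetric (fun l₁ l₂ : List (Fin 27) => ∀ e ∈ edgesOf l₁, e ∉ edgesOf l₂) :=
      fun l₁ l₂ h e he₂ he₁ => h e he₁ he₂
    rcases eq_or_ne l' l with rfl | hne
    · rfl
    · exact absurd hmem' (haveI : Std.Symm (fun l₁ l₂ : List (Fin 27) => ∀ e ∈ edgesOf l₁, e ∉ edgesOf l₂) := ⟨fun _ _ h => hsymm h⟩; hdisj'.forall hl' hl hne _ hmem'')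


def pmemB (a b : Fin 27) (L : List (Fin 27 × Fin 27)) : Bool :=
  L.any (fun p => (p.1 == a && p.2 == b) || (p.1 == b && p.2 == a))

theorem pmemB_iff {a b : Fin 27} {L : List (Fin 27 × Fin 27)} :
    pmemB a b L = true ↔ pmemP a b L := by
  simp [pmemB, pmemP, List.any_eq_true]

theorem subsingleton_of_pairs {l₁ l₂ : List (Fin 27)}
    (h : ((pairs l₁).filter (fun p => pmemB p.1 p.2 (pairs l₂))).length ≤ 1) :
    ({e | e ∈ edgesOf l₁} ∩ {e | e ∈ edgesOf l₂} : Set (Sym2 (Fin 27))).Subsingleton := by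
  intro x hx y hy
  obtain ⟨p, hp, hpx⟩ := List.mem_map.mp hx.1
  obtain ⟨q, hq, hqy⟩ := List.mem_map.mp hy.1
  have hpf : p ∈ (pairs l₁).filter (fun p => pmemB p.1 p.2 (pairs l₂)) := by
    rw [List.mem_filter]
    exact ⟨hp, pmemB_iff.mpr (mem_edgesOf.mp (by rw [hpx]; exact hx.2))⟩
  have hqf : q ∈ (pairs l₁).filter (fun p => pmemB p.1 p.2 (pairs l₂)) := by
    rw [List.mem_filter]
    exact ⟨hq, pmemB_iff.mpr (mem_edgesOf.mp (by rw [hqy]; exact hy.2))⟩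
  rcases hfl : (pairs l₁).filter (fun p => pmemB p.1 p.2 (pairs l₂)) with _ | ⟨a, _ | _⟩
  · rw [hfl] at hpf; simp at hpf
  · rw [hfl, List.mem_singleton] at hpf hqf
    rw [← hpx, ← hqy, hpf, hqf]
  · rw [hfl] at h; simp at h

def hexB (verts : List (List (Fin 27))) : Bool :=
  (List.finRange 27).all fun a => (List.finRange 27).all fun b =>
    ((a : ℕ) / 9 == (b : ℕ) / 9) || verts.any (fun l => pmemB a b (pairs l))

theorem hex_of_hexB {verts : List (List (Fin 27))} (h : hexB verts = true) :
    ∀ a b : Fin 27, G999.Adj a b → ∃ l ∈ verts, pmemP a b (pairs l) := by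
  intro a b hab
  rw [SimpleGraph.fromRel_adj] at hab
  have hne : ¬ ((a : ℕ) / 9 == (b : ℕ) / 9) = true := by
    rcases hab.2 with h' | h'
    · simpa using h'
    · simpa using h'.symm
  rw [hexB, List.all_eq_true] at h
  have h' := List.all_eq_true.mp (h a (List.mem_finRange a)) b (List.mem_finRange b)
  rw [Bool.or_eq_true] at h'
  rcases h' with h' | h'
  · exact absurd h' hne
  · obtain ⟨l, hl, hm⟩ := List.any_eq_true.mp h'
    exact ⟨l, hl, pmemB_iff.mp hm⟩

def disjB : List (List (Fin 27)) → Bool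
  | [] => true
  | l :: rest =>
      (rest.all fun l₂ => (pairs l).all fun p => !(pmemB p.1 p.2 (pairs l₂))) && disjB rest

theorem disj_of_disjB : ∀ {L : List (List (Fin 27))}, disjB L = true →
    L.Pairwise (fun l₁ l₂ => ∀ p ∈ pairs l₁, ¬ pmemP p.1 p.2 (pairs l₂))
  | [], _ => .nil
  | l :: rest, h => by
      rw [disjB, Bool.and_eq_true] at h
      refine List.pairwise_cons.mpr ⟨?_, disj_of_disjB h.2⟩
      intro l₂ hl₂ p hp hmem
      have := List.all_eq_true.mp (List.all_eq_true.mp h.1 l₂ hl₂) p hp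
      rw [Bool.not_eq_true'] at this
      exact absurd (pmemB_iff.mpr hmem) (by rw [this]; simp)

def orthB (v1 v2 : List (List (Fin 27))) : Bool :=
  v1.all fun l₁ => v2.all fun l₂ =>
    ((pairs l₁).filter (fun p => pmemB p.1 p.2 (pairs l₂))).length ≤ 1

def verts1 : List (List (Fin 27)) :=
  [[0, 9, 18, 3, 12, 21, 6, 15, 24],
   [1, 10, 19, 4, 13, 22, 7, 16, 25],
   [2, 11, 20, 5, 14, 23, 8, 17, 26],
   [0, 10, 20, 3, 13, 23, 6, 16, 26],
   [1, 11, 21, 4, 14, 24, 7, 17, 18],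
   [2, 12, 22, 5, 15, 25, 8, 9, 19],
   [0, 11, 22, 3, 14, 25, 6, 17, 19],
   [1, 12, 23, 4, 15, 26, 7, 9, 20],
   [2, 13, 24, 5, 16, 18, 8, 10, 21],
   [0, 12, 24, 3, 15, 18, 6, 9, 21],
   [1, 13, 25, 4, 16, 19, 7, 10, 22],
   [2, 14, 26, 5, 17, 20, 8, 11, 23],
   [0, 13, 26, 3, 16, 20, 6, 10, 23],
   [1, 14, 18, 4, 17, 21, 7, 11, 24],
   [2, 15, 19, 5, 9, 22, 8, 12, 25],
   [0, 14, 19, 3, 17, 22, 6, 11, 25],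
   [1, 15, 20, 4, 9, 23, 7, 12, 26],
   [2, 16, 21, 5, 10, 24, 8, 13, 18],
   [0, 15, 21, 3, 9, 24, 6, 12, 18],
   [1, 16, 22, 4, 10, 25, 7, 13, 19],
   [2, 17, 23, 5, 11, 26, 8, 14, 20],
   [0, 16, 23, 3, 10, 26, 6, 13, 20],
   [1, 17, 24, 4, 11, 18, 7, 14, 21],
   [2, 9, 25, 5, 12, 19, 8, 15, 22],
   [0, 17, 25, 3, 11, 19, 6, 14, 22],
   [1, 9, 26, 4, 12, 20, 7, 15, 23],
   [2, 10, 18, 5, 13, 21, 8, 16, 24]]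

def verts2 : List (List (Fin 27)) :=
  [[0, 16, 26, 8, 9, 20, 4, 12, 24],
   [1, 17, 18, 0, 10, 21, 5, 13, 25],
   [2, 9, 19, 1, 11, 22, 6, 14, 26],
   [3, 10, 20, 2, 12, 23, 7, 15, 18],
   [4, 11, 21, 3, 13, 24, 8, 16, 19],
   [5, 12, 22, 4, 14, 25, 0, 17, 20],
   [6, 13, 23, 5, 15, 26, 1, 9, 21],
   [7, 14, 24, 6, 16, 18, 2, 10, 22],
   [8, 15, 25, 7, 17, 19, 3, 11, 23],
   [0, 12, 26, 3, 14, 23, 2, 15, 22],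
   [1, 13, 18, 4, 15, 24, 3, 16, 23],
   [2, 14, 19, 5, 16, 25, 4, 17, 24],
   [3, 15, 20, 6, 17, 26, 5, 9, 25],
   [4, 16, 21, 7, 9, 18, 6, 10, 26],
   [5, 17, 22, 8, 10, 19, 7, 11, 18],
   [6, 9, 23, 0, 11, 20, 8, 12, 19],
   [7, 10, 24, 1, 12, 21, 0, 13, 20],
   [8, 11, 25, 2, 13, 22, 1, 14, 21],
   [0, 14, 22, 3, 12, 18, 1, 16, 20],
   [1, 15, 23, 4, 13, 19, 2, 17, 21],
   [2, 16, 24, 5, 14, 20, 3, 9, 22],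
   [3, 17, 25, 6, 15, 21, 4, 10, 23],
   [4, 9, 26, 7, 16, 22, 5, 11, 24],
   [5, 10, 18, 8, 17, 23, 6, 12, 25],
   [6, 11, 19, 0, 9, 24, 7, 13, 26],
   [7, 12, 20, 1, 10, 25, 8, 14, 18],
   [8, 13, 21, 2, 11, 26, 0, 15, 19]]


def D1 : Set (Set (Sym2 (Fin 27))) := {C | ∃ l ∈ verts1, C = {e | e ∈ edgesOf l}}
def D2 : Set (Set (Sym2 (Fin 27))) := {C | ∃ l ∈ verts2, C = {e | e ∈ edgesOf l}}

set_option maxHeartbeats 8000000 in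
theorem hex1 : ∀ a b : Fin 27, G999.Adj a b → ∃ l ∈ verts1, pmemP a b (pairs l) :=
  hex_of_hexB (by decide)

set_option maxHeartbeats 8000000 in
theorem hex2 : ∀ a b : Fin 27, G999.Adj a b → ∃ l ∈ verts2, pmemP a b (pairs l) :=
  hex_of_hexB (by decide)

set_option maxHeartbeats 8000000 in
theorem hdisj1 :
    verts1.Pairwise (fun l₁ l₂ => ∀ p ∈ pairs l₁, ¬ pmemP p.1 p.2 (pairs l₂)) :=
  disj_of_disjB (by decide)

set_option maxHeartbeats 8000000 in
theorem hdisj2 :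
    verts2.Pairwise (fun l₁ l₂ => ∀ p ∈ pairs l₁, ¬ pmemP p.1 p.2 (pairs l₂)) :=
  disj_of_disjB (by decide)

set_option maxHeartbeats 8000000 in
theorem horth : ∀ l₁ ∈ verts1, ∀ l₂ ∈ verts2,
    ((pairs l₁).filter (fun p => pmemB p.1 p.2 (pairs l₂))).length ≤ 1 := by
  intro l₁ h₁ l₂ h₂
  have h : orthB verts1 verts2 = true := by decide
  rw [orthB, List.all_eq_true] at h
  have := List.all_eq_true.mp (h l₁ h₁) l₂ h₂
  exact Nat.le_of_ble_eq_true (by simpa using this)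

theorem D_part1 (verts : List (List (Fin 27))) (hv : verts = verts1 ∨ verts = verts2) :
    ∀ C ∈ {C | ∃ l ∈ verts, C = {e | e ∈ edgesOf l}},
      IsCycleEdgeSet 9 C ∧ C ⊆ G999.edgeSet := by
  rintro C ⟨l, hl, rfl⟩
  rcases hv with rfl | rfl <;>
  · simp only [verts1, verts2, List.mem_cons, List.not_mem_nil, or_false] at hl
    rcases hl with rfl|rfl|rfl|rfl|rfl|rfl|rfl|rfl|rfl|rfl|rfl|rfl|rfl|rfl|rfl|rfl|rfl|rfl|rfl|rfl|rfl|rfl|rfl|rfl|rfl|rfl|rfl <;>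
      exact cycleEdgeSet_of _ _ (by decide) (by decide) (by decide) (by decide)


/-- `K_{9,9,9}`: the complete tripartite graph on 27 vertices, the parts being the
blocks of 9 consecutive vertices (vertices adjacent iff in distinct parts). -/
theorem orthogonal_nine_cycle_decompositions_K999 :
    ∃ D₁ D₂ : Set (Set (Sym2 (Fin 27))),
      IsCycleDecomposition (SimpleGraph.fromRel (fun x y : Fin 27 => (x : ℕ) / 9 ≠ (y : ℕ) / 9)) 9 D₁ ∧
      IsCycleDecomposition (SimpleGraph.fromRel (fun x y : Fin 27 => (x : ℕ) / 9 ≠ (y : ℕ) / 9)) 9 D₂ ∧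
      OrthogonalDecompositions D₁ D₂ := by
  refine ⟨D1, D2, ⟨D_part1 verts1 (Or.inl rfl), cover_lemma verts1 hex1 hdisj1⟩,
    ⟨D_part1 verts2 (Or.inr rfl), cover_lemma verts2 hex2 hdisj2⟩, ?_⟩
  rintro C₁ ⟨l₁, hl₁, rfl⟩ C₂ ⟨l₂, hl₂, rfl⟩
  exact subsingleton_of_pairs (horth l₁ hl₁ l₂ hl₂)
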